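/- For every perfect matching M of the Petersen graph GP(5,2), the maximum number of pairwise vertex-disjoint M-alternating cycles equals 1, and hence f(GP(5,2),M) > C(GP(5,2),M). -/

import Mathlib

open SimpleGraph

/-- The generalized Petersen graph `GP(n,k)`: vertices `u i = Sum.inl i`,
`v i = Sum.inr i`, edges `u i -- u (i+k)`, `u i -- v i`, `v i -- v (i+1)` (mod n). -/
def GP (n k : ℕ) : SimpleGraph (Fin n ⊕ Fin n) :=
  SimpleGraph.fromRel (fun a b =>
    match a, b with
    | Sum.inl i, Sum.inl j => (j : ℕ) = ((i : ℕ) + k) % n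
    | Sum.inl i, Sum.inr j => i = j
    | Sum.inr i, Sum.inr j => (j : ℕ) = ((i : ℕ) + 1) % n
    | _, _ => False)

/-- `S` is a forcing set of the perfect matching `M` of `G`:
`S` consists of edges of `M` and `M` is the unique perfect matching containing `S`. -/
def IsForcingSet {V : Type*} (G : SimpleGraph V) (M : G.Subgraph) (S : Set (Sym2 V)) : Prop :=
  S ⊆ M.edgeSet ∧
    ∀ M' : G.Subgraph, M'.IsPerfectMatching → S ⊆ M'.edgeSet → M' = M

/-- The forcing number `f(G,M)`: minimum cardinality of a forcing set of `M`. -/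
noncomputable def forcingNum {V : Type*} (G : SimpleGraph V) (M : G.Subgraph) : ℕ :=
  sInf {k | ∃ S : Set (Sym2 V), IsForcingSet G M S ∧ S.ncard = k}

/-- A cycle `p` of `G` is `M`-alternating: its edges lie alternately in `M` and outside `M`.
For a perfect matching `M` this is equivalent to saying that every vertex of the
cycle is covered by an edge of `M` lying on the cycle. -/
def IsAltCycle {V : Type*} (G : SimpleGraph V) (M : G.Subgraph) {v : V} (p : G.Walk v v) : Prop :=
  p.IsCycle ∧ ∀ u ∈ p.support, ∃ e ∈ p.edges, e ∈ M.edgeSet ∧ u ∈ e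

/-- `C(G,M)`: the maximum number of pairwise vertex-disjoint `M`-alternating cycles of `G`. -/
noncomputable def maxDisjAltCycles {V : Type*} (G : SimpleGraph V) (M : G.Subgraph) : ℕ :=
  sSup {k | ∃ c : Fin k → Σ v : V, G.Walk v v,
    (∀ i, IsAltCycle G M (c i).2) ∧
    Pairwise fun i j => List.Disjoint (c i).2.support (c j).2.support}

/-! ### Auxiliary definitions and lemmas -/

abbrev V5 := Fin 5 ⊕ Fin 5

instance GPdec : DecidableRel (GP 5 2).Adj
  | Sum.inl i, Sum.inl j => decidable_of_iff ((Sum.inl i : V5) ≠ Sum.inl j ∧ ((j:ℕ) = ((i:ℕ)+2)%5 ∨ (i:ℕ) = ((j:ℕ)+2)%5)) Iff.rfl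
  | Sum.inl i, Sum.inr j => decidable_of_iff ((Sum.inl i : V5) ≠ Sum.inr j ∧ (i = j ∨ False)) Iff.rfl
  | Sum.inr i, Sum.inl j => decidable_of_iff ((Sum.inr i : V5) ≠ Sum.inl j ∧ (False ∨ j = i)) Iff.rfl
  | Sum.inr i, Sum.inr j => decidable_of_iff ((Sum.inr i : V5) ≠ Sum.inr j ∧ ((j:ℕ) = ((i:ℕ)+1)%5 ∨ (i:ℕ) = ((j:ℕ)+1)%5)) Iff.rfl
def pmf : Fin 6 → V5 → V5
  | 0, (Sum.inl 0) => (Sum.inl 2)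
  | 0, (Sum.inl 1) => (Sum.inl 3)
  | 0, (Sum.inl 2) => (Sum.inl 0)
  | 0, (Sum.inl 3) => (Sum.inl 1)
  | 0, (Sum.inl 4) => (Sum.inr 4)
  | 0, (Sum.inr 0) => (Sum.inr 1)
  | 0, (Sum.inr 1) => (Sum.inr 0)
  | 0, (Sum.inr 2) => (Sum.inr 3)
  | 0, (Sum.inr 3) => (Sum.inr 2)
  | 0, (Sum.inr 4) => (Sum.inl 4)
  | 1, (Sum.inl 0) => (Sum.inl 2)
  | 1, (Sum.inl 1) => (Sum.inl 4)
  | 1, (Sum.inl 2) => (Sum.inl 0)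
  | 1, (Sum.inl 3) => (Sum.inr 3)
  | 1, (Sum.inl 4) => (Sum.inl 1)
  | 1, (Sum.inr 0) => (Sum.inr 4)
  | 1, (Sum.inr 1) => (Sum.inr 2)
  | 1, (Sum.inr 2) => (Sum.inr 1)
  | 1, (Sum.inr 3) => (Sum.inl 3)
  | 1, (Sum.inr 4) => (Sum.inr 0)
  | 2, (Sum.inl 0) => (Sum.inl 3)
  | 2, (Sum.inl 1) => (Sum.inl 4)
  | 2, (Sum.inl 2) => (Sum.inr 2)
  | 2, (Sum.inl 3) => (Sum.inl 0)
  | 2, (Sum.inl 4) => (Sum.inl 1)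
  | 2, (Sum.inr 0) => (Sum.inr 1)
  | 2, (Sum.inr 1) => (Sum.inr 0)
  | 2, (Sum.inr 2) => (Sum.inl 2)
  | 2, (Sum.inr 3) => (Sum.inr 4)
  | 2, (Sum.inr 4) => (Sum.inr 3)
  | 3, (Sum.inl 0) => (Sum.inl 3)
  | 3, (Sum.inl 1) => (Sum.inr 1)
  | 3, (Sum.inl 2) => (Sum.inl 4)
  | 3, (Sum.inl 3) => (Sum.inl 0)
  | 3, (Sum.inl 4) => (Sum.inl 2)
  | 3, (Sum.inr 0) => (Sum.inr 4)
  | 3, (Sum.inr 1) => (Sum.inl 1)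
  | 3, (Sum.inr 2) => (Sum.inr 3)
  | 3, (Sum.inr 3) => (Sum.inr 2)
  | 3, (Sum.inr 4) => (Sum.inr 0)
  | 4, (Sum.inl 0) => (Sum.inr 0)
  | 4, (Sum.inl 1) => (Sum.inl 3)
  | 4, (Sum.inl 2) => (Sum.inl 4)
  | 4, (Sum.inl 3) => (Sum.inl 1)
  | 4, (Sum.inl 4) => (Sum.inl 2)
  | 4, (Sum.inr 0) => (Sum.inl 0)
  | 4, (Sum.inr 1) => (Sum.inr 2)
  | 4, (Sum.inr 2) => (Sum.inr 1)
  | 4, (Sum.inr 3) => (Sum.inr 4)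
  | 4, (Sum.inr 4) => (Sum.inr 3)
  | 5, (Sum.inl 0) => (Sum.inr 0)
  | 5, (Sum.inl 1) => (Sum.inr 1)
  | 5, (Sum.inl 2) => (Sum.inr 2)
  | 5, (Sum.inl 3) => (Sum.inr 3)
  | 5, (Sum.inl 4) => (Sum.inr 4)
  | 5, (Sum.inr 0) => (Sum.inl 0)
  | 5, (Sum.inr 1) => (Sum.inl 1)
  | 5, (Sum.inr 2) => (Sum.inl 2)
  | 5, (Sum.inr 3) => (Sum.inl 3)
  | 5, (Sum.inr 4) => (Sum.inl 4)

def nbr : V5 → Fin 3 → V5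
  | (Sum.inl 0), 0 => (Sum.inl 2)
  | (Sum.inl 0), 1 => (Sum.inl 3)
  | (Sum.inl 0), 2 => (Sum.inr 0)
  | (Sum.inl 1), 0 => (Sum.inl 3)
  | (Sum.inl 1), 1 => (Sum.inl 4)
  | (Sum.inl 1), 2 => (Sum.inr 1)
  | (Sum.inl 2), 0 => (Sum.inl 0)
  | (Sum.inl 2), 1 => (Sum.inl 4)
  | (Sum.inl 2), 2 => (Sum.inr 2)
  | (Sum.inl 3), 0 => (Sum.inl 0)
  | (Sum.inl 3), 1 => (Sum.inl 1)
  | (Sum.inl 3), 2 => (Sum.inr 3)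
  | (Sum.inl 4), 0 => (Sum.inl 1)
  | (Sum.inl 4), 1 => (Sum.inl 2)
  | (Sum.inl 4), 2 => (Sum.inr 4)
  | (Sum.inr 0), 0 => (Sum.inl 0)
  | (Sum.inr 0), 1 => (Sum.inr 1)
  | (Sum.inr 0), 2 => (Sum.inr 4)
  | (Sum.inr 1), 0 => (Sum.inl 1)
  | (Sum.inr 1), 1 => (Sum.inr 0)
  | (Sum.inr 1), 2 => (Sum.inr 2)
  | (Sum.inr 2), 0 => (Sum.inl 2)
  | (Sum.inr 2), 1 => (Sum.inr 1)
  | (Sum.inr 2), 2 => (Sum.inr 3)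
  | (Sum.inr 3), 0 => (Sum.inl 3)
  | (Sum.inr 3), 1 => (Sum.inr 2)
  | (Sum.inr 3), 2 => (Sum.inr 4)
  | (Sum.inr 4), 0 => (Sum.inl 4)
  | (Sum.inr 4), 1 => (Sum.inr 0)
  | (Sum.inr 4), 2 => (Sum.inr 3)

lemma nbr_cover : ∀ v w : V5, ¬((GP 5 2).Adj v w ∧ w ≠ nbr v 0 ∧ w ≠ nbr v 1 ∧ w ≠ nbr v 2) := by decide

lemma nbr_cases (v w : V5) (h : (GP 5 2).Adj v w) : w = nbr v 0 ∨ w = nbr v 1 ∨ w = nbr v 2 := by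
  by_contra hc
  push_neg at hc
  exact nbr_cover v w ⟨h, hc.1, hc.2.1, hc.2.2⟩

lemma gp_no4 : ∀ a b c d : V5, ¬((GP 5 2).Adj a b ∧ (GP 5 2).Adj b c ∧ (GP 5 2).Adj c d ∧ (GP 5 2).Adj d a ∧ a ≠ c ∧ b ≠ d) := by decide

lemma gp_adj_pmf : ∀ (i : Fin 6) (a : V5), (GP 5 2).Adj a (pmf i a) := by decide

lemma pmf_invol : ∀ (i : Fin 6) (a : V5), pmf i (pmf i a) = a := by decide

lemma pmf_other : ∀ (i : Fin 6) (a : V5), ∃ j : Fin 6, j ≠ i ∧ pmf j a = pmf i a := by decide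

lemma pmf_differ : ∀ i j : Fin 6, ¬(i ≠ j ∧ ∀ v, pmf i v = pmf j v) := by decide

lemma no4 {v : V5} {p : (GP 5 2).Walk v v} (hc : p.IsCycle) : p.length ≠ 4 := by
  intro h4
  rcases p with _ | ⟨h1, q⟩
  · simp at h4
  rcases q with _ | ⟨h2, q⟩
  · simp at h4
  rcases q with _ | ⟨h3, q⟩
  · simp at h4
  rcases q with _ | ⟨h4', q⟩
  · simp at h4
  have hq0 : q.length = 0 := by simpa using h4
  have heq := SimpleGraph.Walk.eq_of_length_eq_zero hq0
  subst heq
  have hq : q = Walk.nil := by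
    cases q with
    | nil => rfl
    | cons _ _ => simp at hq0
  subst hq
  have hnd := hc.2
  simp only [Walk.support_cons, Walk.support_nil, List.tail_cons, List.nodup_cons,
    List.mem_cons, List.mem_singleton, List.not_mem_nil, not_or] at hnd
  obtain ⟨⟨hab, hac, -⟩, ⟨hbc, hbd, -⟩, hcd, -⟩ := hnd
  exact gp_no4 _ _ _ _ ⟨h1, h2, h3, h4', fun h => hbd h.symm, hac⟩

lemma even_card_of_invol_aux {α : Type*} [DecidableEq α] (f : α → α) :
    ∀ n (S : Finset α), S.card = n → (∀ x ∈ S, f x ∈ S) → (∀ x ∈ S, f (f x) = x) →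
      (∀ x ∈ S, f x ≠ x) → Even S.card := by
  intro n
  induction n using Nat.strong_induction_on with
  | _ n ih =>
    intro S hn h1 h2 h3
    rcases S.eq_empty_or_nonempty with rfl | ⟨x, hx⟩
    · simp
    · have hfx := h1 x hx
      have hne := h3 x hx
      set S' := S \ {x, f x} with hS'
      have hsub : ({x, f x} : Finset α) ⊆ S := by
        intro y hy; simp at hy; rcases hy with rfl|rfl <;> assumption
      have hcard : S'.card = S.card - 2 := by
        rw [hS', Finset.card_sdiff, Finset.inter_eq_left.mpr hsub]
        simp [Finset.card_insert_of_notMem, hne.symm]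
      have h1' : ∀ y ∈ S', f y ∈ S' := by
        intro y hy
        rw [hS', Finset.mem_sdiff] at hy ⊢
        obtain ⟨hyS, hyn⟩ := hy
        simp only [Finset.mem_insert, Finset.mem_singleton] at hyn ⊢
        push_neg at hyn ⊢
        refine ⟨h1 y hyS, ?_, ?_⟩
        · intro h; exact hyn.2 (by rw [← h2 y hyS, h])
        · intro h
          have := h2 y hyS
          rw [h, h2 x hx] at this
          exact hyn.1 this.symm
      have h2' : ∀ y ∈ S', f (f y) = y := fun y hy => h2 y (Finset.mem_sdiff.mp hy).1
      have h3' : ∀ y ∈ S', f y ≠ y := fun y hy => h3 y (Finset.mem_sdiff.mp hy).1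
      have hc2 : 2 ≤ S.card := by
        calc 2 = ({x, f x} : Finset α).card := by simp [hne.symm]
        _ ≤ S.card := Finset.card_le_card hsub
      have hev := ih (S.card - 2) (by omega) S' hcard h1' h2' h3'
      rw [hcard] at hev
      rcases hev with ⟨k, hk⟩
      exact ⟨k + 1, by omega⟩

lemma even_card_of_invol {α : Type*} [DecidableEq α] (f : α → α) (S : Finset α)
    (h1 : ∀ x ∈ S, f x ∈ S) (h2 : ∀ x ∈ S, f (f x) = x) (h3 : ∀ x ∈ S, f x ≠ x) :
    Even S.card :=
  even_card_of_invol_aux f S.card S rfl h1 h2 h3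

lemma cycle_support_card {V : Type*} [DecidableEq V] {G : SimpleGraph V} {v : V} {p : G.Walk v v}
    (hp : p.IsCycle) : p.support.toFinset.card = p.length := by
  cases p with
  | nil => exact absurd hp (by simp)
  | cons h q =>
    have hnd : q.support.Nodup := by
      have := hp.2
      simpa using this
    have hv : v ∈ q.support := q.end_mem_support
    rw [Walk.support_cons, List.toFinset_cons, Finset.insert_eq_self.mpr (by simpa using hv)]
    rw [List.toFinset_card_of_nodup hnd, Walk.length_support q, Walk.length_cons]

lemma alt_support_big (M : (GP 5 2).Subgraph) (f : V5 → V5)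
    (hf : ∀ v w, M.Adj v w ↔ w = f v) (hinv : ∀ v, f (f v) = v) (hne : ∀ v, f v ≠ v)
    {v : V5} {p : (GP 5 2).Walk v v} (hp : IsAltCycle (GP 5 2) M p) :
    6 ≤ p.support.toFinset.card := by
  obtain ⟨hc, halt⟩ := hp
  have hclosed : ∀ u ∈ p.support.toFinset, f u ∈ p.support.toFinset := by
    intro u hu
    rw [List.mem_toFinset] at hu ⊢
    obtain ⟨e, he, heM, hue⟩ := halt u hu
    induction e with
    | h a b =>
      rw [Subgraph.mem_edgeSet, hf] at heM
      subst heM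
      rw [Sym2.mem_iff] at hue
      rcases hue with rfl | rfl
      · exact p.snd_mem_support_of_mem_edges he
      · rw [hinv]
        exact p.fst_mem_support_of_mem_edges he
  have heven := even_card_of_invol f _ hclosed (fun x _ => hinv x) (fun x _ => hne x)
  have hcard := cycle_support_card hc
  have h3 := hc.three_le_length
  have h4 := no4 hc
  rw [hcard] at heven ⊢
  rcases heven with ⟨k, hk⟩
  omega

/-- The six perfect matchings of the Petersen graph as subgraphs. -/
def Msub (i : Fin 6) : (GP 5 2).Subgraph where
  verts := Set.univ
  Adj a b := b = pmf i a
  adj_sub := by rintro a b rfl; exact gp_adj_pmf i a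
  edge_vert := fun _ => Set.mem_univ _
  symm := ⟨by rintro a b rfl; exact (pmf_invol i a).symm⟩

lemma Msub_pm (i : Fin 6) : (Msub i).IsPerfectMatching :=
  ⟨fun v _ => ⟨pmf i v, rfl, fun y hy => hy⟩, fun v => Set.mem_univ v⟩

lemma classify (f : V5 → V5) (hadj : ∀ v, (GP 5 2).Adj v (f v)) (hinv : ∀ v, f (f v) = v) :
    ∃ i : Fin 6, ∀ v, f v = pmf i v := by
  rcases nbr_cases (Sum.inl 0) (f (Sum.inl 0)) (hadj (Sum.inl 0)) with hl0|hl0|hl0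
  · replace hl0 : f (Sum.inl 0) = (Sum.inl 2) := hl0
    have hl2 : f (Sum.inl 2) = (Sum.inl 0) := by
      have t := hinv (Sum.inl 0); rwa [hl0] at t
    rcases nbr_cases (Sum.inl 1) (f (Sum.inl 1)) (hadj (Sum.inl 1)) with hl1|hl1|hl1
    · replace hl1 : f (Sum.inl 1) = (Sum.inl 3) := hl1
      have hl3 : f (Sum.inl 3) = (Sum.inl 1) := by
        have t := hinv (Sum.inl 1); rwa [hl1] at t
      rcases nbr_cases (Sum.inl 4) (f (Sum.inl 4)) (hadj (Sum.inl 4)) with hl4|hl4|hl4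
      · replace hl4 : f (Sum.inl 4) = (Sum.inl 1) := hl4
        have hc := hinv (Sum.inl 4)
        rw [hl4, hl1] at hc
        exact absurd hc (by decide)
      · replace hl4 : f (Sum.inl 4) = (Sum.inl 2) := hl4
        have hc := hinv (Sum.inl 4)
        rw [hl4, hl2] at hc
        exact absurd hc (by decide)
      · replace hl4 : f (Sum.inl 4) = (Sum.inr 4) := hl4
        have hr4 : f (Sum.inr 4) = (Sum.inl 4) := by
          have t := hinv (Sum.inl 4); rwa [hl4] at t
        rcases nbr_cases (Sum.inr 0) (f (Sum.inr 0)) (hadj (Sum.inr 0)) with hr0|hr0|hr0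
        · replace hr0 : f (Sum.inr 0) = (Sum.inl 0) := hr0
          have hc := hinv (Sum.inr 0)
          rw [hr0, hl0] at hc
          exact absurd hc (by decide)
        · replace hr0 : f (Sum.inr 0) = (Sum.inr 1) := hr0
          have hr1 : f (Sum.inr 1) = (Sum.inr 0) := by
            have t := hinv (Sum.inr 0); rwa [hr0] at t
          rcases nbr_cases (Sum.inr 2) (f (Sum.inr 2)) (hadj (Sum.inr 2)) with hr2|hr2|hr2
          · replace hr2 : f (Sum.inr 2) = (Sum.inl 2) := hr2
            have hc := hinv (Sum.inr 2)
            rw [hr2, hl2] at hc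
            exact absurd hc (by decide)
          · replace hr2 : f (Sum.inr 2) = (Sum.inr 1) := hr2
            have hc := hinv (Sum.inr 2)
            rw [hr2, hr1] at hc
            exact absurd hc (by decide)
          · replace hr2 : f (Sum.inr 2) = (Sum.inr 3) := hr2
            have hr3 : f (Sum.inr 3) = (Sum.inr 2) := by
              have t := hinv (Sum.inr 2); rwa [hr2] at t
            refine ⟨0, fun v => ?_⟩
            rcases v with j|j <;> fin_cases j
            · exact hl0
            · exact hl1
            · exact hl2
            · exact hl3
            · exact hl4
            · exact hr0
            · exact hr1
            · exact hr2
            · exact hr3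
            · exact hr4
        · replace hr0 : f (Sum.inr 0) = (Sum.inr 4) := hr0
          have hc := hinv (Sum.inr 0)
          rw [hr0, hr4] at hc
          exact absurd hc (by decide)
    · replace hl1 : f (Sum.inl 1) = (Sum.inl 4) := hl1
      have hl4 : f (Sum.inl 4) = (Sum.inl 1) := by
        have t := hinv (Sum.inl 1); rwa [hl1] at t
      rcases nbr_cases (Sum.inl 3) (f (Sum.inl 3)) (hadj (Sum.inl 3)) with hl3|hl3|hl3
      · replace hl3 : f (Sum.inl 3) = (Sum.inl 0) := hl3
        have hc := hinv (Sum.inl 3)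
        rw [hl3, hl0] at hc
        exact absurd hc (by decide)
      · replace hl3 : f (Sum.inl 3) = (Sum.inl 1) := hl3
        have hc := hinv (Sum.inl 3)
        rw [hl3, hl1] at hc
        exact absurd hc (by decide)
      · replace hl3 : f (Sum.inl 3) = (Sum.inr 3) := hl3
        have hr3 : f (Sum.inr 3) = (Sum.inl 3) := by
          have t := hinv (Sum.inl 3); rwa [hl3] at t
        rcases nbr_cases (Sum.inr 0) (f (Sum.inr 0)) (hadj (Sum.inr 0)) with hr0|hr0|hr0
        · replace hr0 : f (Sum.inr 0) = (Sum.inl 0) := hr0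
          have hc := hinv (Sum.inr 0)
          rw [hr0, hl0] at hc
          exact absurd hc (by decide)
        · replace hr0 : f (Sum.inr 0) = (Sum.inr 1) := hr0
          have hr1 : f (Sum.inr 1) = (Sum.inr 0) := by
            have t := hinv (Sum.inr 0); rwa [hr0] at t
          rcases nbr_cases (Sum.inr 2) (f (Sum.inr 2)) (hadj (Sum.inr 2)) with hr2|hr2|hr2
          · replace hr2 : f (Sum.inr 2) = (Sum.inl 2) := hr2
            have hc := hinv (Sum.inr 2)
            rw [hr2, hl2] at hc
            exact absurd hc (by decide)
          · replace hr2 : f (Sum.inr 2) = (Sum.inr 1) := hr2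
            have hc := hinv (Sum.inr 2)
            rw [hr2, hr1] at hc
            exact absurd hc (by decide)
          · replace hr2 : f (Sum.inr 2) = (Sum.inr 3) := hr2
            have hc := hinv (Sum.inr 2)
            rw [hr2, hr3] at hc
            exact absurd hc (by decide)
        · replace hr0 : f (Sum.inr 0) = (Sum.inr 4) := hr0
          have hr4 : f (Sum.inr 4) = (Sum.inr 0) := by
            have t := hinv (Sum.inr 0); rwa [hr0] at t
          rcases nbr_cases (Sum.inr 1) (f (Sum.inr 1)) (hadj (Sum.inr 1)) with hr1|hr1|hr1
          · replace hr1 : f (Sum.inr 1) = (Sum.inl 1) := hr1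
            have hc := hinv (Sum.inr 1)
            rw [hr1, hl1] at hc
            exact absurd hc (by decide)
          · replace hr1 : f (Sum.inr 1) = (Sum.inr 0) := hr1
            have hc := hinv (Sum.inr 1)
            rw [hr1, hr0] at hc
            exact absurd hc (by decide)
          · replace hr1 : f (Sum.inr 1) = (Sum.inr 2) := hr1
            have hr2 : f (Sum.inr 2) = (Sum.inr 1) := by
              have t := hinv (Sum.inr 1); rwa [hr1] at t
            refine ⟨1, fun v => ?_⟩
            rcases v with j|j <;> fin_cases j
            · exact hl0
            · exact hl1
            · exact hl2
            · exact hl3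
            · exact hl4
            · exact hr0
            · exact hr1
            · exact hr2
            · exact hr3
            · exact hr4
    · replace hl1 : f (Sum.inl 1) = (Sum.inr 1) := hl1
      have hr1 : f (Sum.inr 1) = (Sum.inl 1) := by
        have t := hinv (Sum.inl 1); rwa [hl1] at t
      rcases nbr_cases (Sum.inl 3) (f (Sum.inl 3)) (hadj (Sum.inl 3)) with hl3|hl3|hl3
      · replace hl3 : f (Sum.inl 3) = (Sum.inl 0) := hl3
        have hc := hinv (Sum.inl 3)
        rw [hl3, hl0] at hc
        exact absurd hc (by decide)
      · replace hl3 : f (Sum.inl 3) = (Sum.inl 1) := hl3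
        have hc := hinv (Sum.inl 3)
        rw [hl3, hl1] at hc
        exact absurd hc (by decide)
      · replace hl3 : f (Sum.inl 3) = (Sum.inr 3) := hl3
        have hr3 : f (Sum.inr 3) = (Sum.inl 3) := by
          have t := hinv (Sum.inl 3); rwa [hl3] at t
        rcases nbr_cases (Sum.inl 4) (f (Sum.inl 4)) (hadj (Sum.inl 4)) with hl4|hl4|hl4
        · replace hl4 : f (Sum.inl 4) = (Sum.inl 1) := hl4
          have hc := hinv (Sum.inl 4)
          rw [hl4, hl1] at hc
          exact absurd hc (by decide)
        · replace hl4 : f (Sum.inl 4) = (Sum.inl 2) := hl4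
          have hc := hinv (Sum.inl 4)
          rw [hl4, hl2] at hc
          exact absurd hc (by decide)
        · replace hl4 : f (Sum.inl 4) = (Sum.inr 4) := hl4
          have hr4 : f (Sum.inr 4) = (Sum.inl 4) := by
            have t := hinv (Sum.inl 4); rwa [hl4] at t
          rcases nbr_cases (Sum.inr 0) (f (Sum.inr 0)) (hadj (Sum.inr 0)) with hr0|hr0|hr0
          · replace hr0 : f (Sum.inr 0) = (Sum.inl 0) := hr0
            have hc := hinv (Sum.inr 0)
            rw [hr0, hl0] at hc
            exact absurd hc (by decide)
          · replace hr0 : f (Sum.inr 0) = (Sum.inr 1) := hr0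
            have hc := hinv (Sum.inr 0)
            rw [hr0, hr1] at hc
            exact absurd hc (by decide)
          · replace hr0 : f (Sum.inr 0) = (Sum.inr 4) := hr0
            have hc := hinv (Sum.inr 0)
            rw [hr0, hr4] at hc
            exact absurd hc (by decide)
  · replace hl0 : f (Sum.inl 0) = (Sum.inl 3) := hl0
    have hl3 : f (Sum.inl 3) = (Sum.inl 0) := by
      have t := hinv (Sum.inl 0); rwa [hl0] at t
    rcases nbr_cases (Sum.inl 1) (f (Sum.inl 1)) (hadj (Sum.inl 1)) with hl1|hl1|hl1
    · replace hl1 : f (Sum.inl 1) = (Sum.inl 3) := hl1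
      have hc := hinv (Sum.inl 1)
      rw [hl1, hl3] at hc
      exact absurd hc (by decide)
    · replace hl1 : f (Sum.inl 1) = (Sum.inl 4) := hl1
      have hl4 : f (Sum.inl 4) = (Sum.inl 1) := by
        have t := hinv (Sum.inl 1); rwa [hl1] at t
      rcases nbr_cases (Sum.inl 2) (f (Sum.inl 2)) (hadj (Sum.inl 2)) with hl2|hl2|hl2
      · replace hl2 : f (Sum.inl 2) = (Sum.inl 0) := hl2
        have hc := hinv (Sum.inl 2)
        rw [hl2, hl0] at hc
        exact absurd hc (by decide)
      · replace hl2 : f (Sum.inl 2) = (Sum.inl 4) := hl2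
        have hc := hinv (Sum.inl 2)
        rw [hl2, hl4] at hc
        exact absurd hc (by decide)
      · replace hl2 : f (Sum.inl 2) = (Sum.inr 2) := hl2
        have hr2 : f (Sum.inr 2) = (Sum.inl 2) := by
          have t := hinv (Sum.inl 2); rwa [hl2] at t
        rcases nbr_cases (Sum.inr 0) (f (Sum.inr 0)) (hadj (Sum.inr 0)) with hr0|hr0|hr0
        · replace hr0 : f (Sum.inr 0) = (Sum.inl 0) := hr0
          have hc := hinv (Sum.inr 0)
          rw [hr0, hl0] at hc
          exact absurd hc (by decide)
        · replace hr0 : f (Sum.inr 0) = (Sum.inr 1) := hr0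
          have hr1 : f (Sum.inr 1) = (Sum.inr 0) := by
            have t := hinv (Sum.inr 0); rwa [hr0] at t
          rcases nbr_cases (Sum.inr 3) (f (Sum.inr 3)) (hadj (Sum.inr 3)) with hr3|hr3|hr3
          · replace hr3 : f (Sum.inr 3) = (Sum.inl 3) := hr3
            have hc := hinv (Sum.inr 3)
            rw [hr3, hl3] at hc
            exact absurd hc (by decide)
          · replace hr3 : f (Sum.inr 3) = (Sum.inr 2) := hr3
            have hc := hinv (Sum.inr 3)
            rw [hr3, hr2] at hc
            exact absurd hc (by decide)
          · replace hr3 : f (Sum.inr 3) = (Sum.inr 4) := hr3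
            have hr4 : f (Sum.inr 4) = (Sum.inr 3) := by
              have t := hinv (Sum.inr 3); rwa [hr3] at t
            refine ⟨2, fun v => ?_⟩
            rcases v with j|j <;> fin_cases j
            · exact hl0
            · exact hl1
            · exact hl2
            · exact hl3
            · exact hl4
            · exact hr0
            · exact hr1
            · exact hr2
            · exact hr3
            · exact hr4
        · replace hr0 : f (Sum.inr 0) = (Sum.inr 4) := hr0
          have hr4 : f (Sum.inr 4) = (Sum.inr 0) := by
            have t := hinv (Sum.inr 0); rwa [hr0] at t
          rcases nbr_cases (Sum.inr 1) (f (Sum.inr 1)) (hadj (Sum.inr 1)) with hr1|hr1|hr1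
          · replace hr1 : f (Sum.inr 1) = (Sum.inl 1) := hr1
            have hc := hinv (Sum.inr 1)
            rw [hr1, hl1] at hc
            exact absurd hc (by decide)
          · replace hr1 : f (Sum.inr 1) = (Sum.inr 0) := hr1
            have hc := hinv (Sum.inr 1)
            rw [hr1, hr0] at hc
            exact absurd hc (by decide)
          · replace hr1 : f (Sum.inr 1) = (Sum.inr 2) := hr1
            have hc := hinv (Sum.inr 1)
            rw [hr1, hr2] at hc
            exact absurd hc (by decide)
    · replace hl1 : f (Sum.inl 1) = (Sum.inr 1) := hl1
      have hr1 : f (Sum.inr 1) = (Sum.inl 1) := by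
        have t := hinv (Sum.inl 1); rwa [hl1] at t
      rcases nbr_cases (Sum.inl 2) (f (Sum.inl 2)) (hadj (Sum.inl 2)) with hl2|hl2|hl2
      · replace hl2 : f (Sum.inl 2) = (Sum.inl 0) := hl2
        have hc := hinv (Sum.inl 2)
        rw [hl2, hl0] at hc
        exact absurd hc (by decide)
      · replace hl2 : f (Sum.inl 2) = (Sum.inl 4) := hl2
        have hl4 : f (Sum.inl 4) = (Sum.inl 2) := by
          have t := hinv (Sum.inl 2); rwa [hl2] at t
        rcases nbr_cases (Sum.inr 0) (f (Sum.inr 0)) (hadj (Sum.inr 0)) with hr0|hr0|hr0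
        · replace hr0 : f (Sum.inr 0) = (Sum.inl 0) := hr0
          have hc := hinv (Sum.inr 0)
          rw [hr0, hl0] at hc
          exact absurd hc (by decide)
        · replace hr0 : f (Sum.inr 0) = (Sum.inr 1) := hr0
          have hc := hinv (Sum.inr 0)
          rw [hr0, hr1] at hc
          exact absurd hc (by decide)
        · replace hr0 : f (Sum.inr 0) = (Sum.inr 4) := hr0
          have hr4 : f (Sum.inr 4) = (Sum.inr 0) := by
            have t := hinv (Sum.inr 0); rwa [hr0] at t
          rcases nbr_cases (Sum.inr 2) (f (Sum.inr 2)) (hadj (Sum.inr 2)) with hr2|hr2|hr2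
          · replace hr2 : f (Sum.inr 2) = (Sum.inl 2) := hr2
            have hc := hinv (Sum.inr 2)
            rw [hr2, hl2] at hc
            exact absurd hc (by decide)
          · replace hr2 : f (Sum.inr 2) = (Sum.inr 1) := hr2
            have hc := hinv (Sum.inr 2)
            rw [hr2, hr1] at hc
            exact absurd hc (by decide)
          · replace hr2 : f (Sum.inr 2) = (Sum.inr 3) := hr2
            have hr3 : f (Sum.inr 3) = (Sum.inr 2) := by
              have t := hinv (Sum.inr 2); rwa [hr2] at t
            refine ⟨3, fun v => ?_⟩
            rcases v with j|j <;> fin_cases j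
            · exact hl0
            · exact hl1
            · exact hl2
            · exact hl3
            · exact hl4
            · exact hr0
            · exact hr1
            · exact hr2
            · exact hr3
            · exact hr4
      · replace hl2 : f (Sum.inl 2) = (Sum.inr 2) := hl2
        have hr2 : f (Sum.inr 2) = (Sum.inl 2) := by
          have t := hinv (Sum.inl 2); rwa [hl2] at t
        rcases nbr_cases (Sum.inl 4) (f (Sum.inl 4)) (hadj (Sum.inl 4)) with hl4|hl4|hl4
        · replace hl4 : f (Sum.inl 4) = (Sum.inl 1) := hl4
          have hc := hinv (Sum.inl 4)
          rw [hl4, hl1] at hc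
          exact absurd hc (by decide)
        · replace hl4 : f (Sum.inl 4) = (Sum.inl 2) := hl4
          have hc := hinv (Sum.inl 4)
          rw [hl4, hl2] at hc
          exact absurd hc (by decide)
        · replace hl4 : f (Sum.inl 4) = (Sum.inr 4) := hl4
          have hr4 : f (Sum.inr 4) = (Sum.inl 4) := by
            have t := hinv (Sum.inl 4); rwa [hl4] at t
          rcases nbr_cases (Sum.inr 0) (f (Sum.inr 0)) (hadj (Sum.inr 0)) with hr0|hr0|hr0
          · replace hr0 : f (Sum.inr 0) = (Sum.inl 0) := hr0
            have hc := hinv (Sum.inr 0)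
            rw [hr0, hl0] at hc
            exact absurd hc (by decide)
          · replace hr0 : f (Sum.inr 0) = (Sum.inr 1) := hr0
            have hc := hinv (Sum.inr 0)
            rw [hr0, hr1] at hc
            exact absurd hc (by decide)
          · replace hr0 : f (Sum.inr 0) = (Sum.inr 4) := hr0
            have hc := hinv (Sum.inr 0)
            rw [hr0, hr4] at hc
            exact absurd hc (by decide)
  · replace hl0 : f (Sum.inl 0) = (Sum.inr 0) := hl0
    have hr0 : f (Sum.inr 0) = (Sum.inl 0) := by
      have t := hinv (Sum.inl 0); rwa [hl0] at t
    rcases nbr_cases (Sum.inl 1) (f (Sum.inl 1)) (hadj (Sum.inl 1)) with hl1|hl1|hl1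
    · replace hl1 : f (Sum.inl 1) = (Sum.inl 3) := hl1
      have hl3 : f (Sum.inl 3) = (Sum.inl 1) := by
        have t := hinv (Sum.inl 1); rwa [hl1] at t
      rcases nbr_cases (Sum.inl 2) (f (Sum.inl 2)) (hadj (Sum.inl 2)) with hl2|hl2|hl2
      · replace hl2 : f (Sum.inl 2) = (Sum.inl 0) := hl2
        have hc := hinv (Sum.inl 2)
        rw [hl2, hl0] at hc
        exact absurd hc (by decide)
      · replace hl2 : f (Sum.inl 2) = (Sum.inl 4) := hl2
        have hl4 : f (Sum.inl 4) = (Sum.inl 2) := by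
          have t := hinv (Sum.inl 2); rwa [hl2] at t
        rcases nbr_cases (Sum.inr 1) (f (Sum.inr 1)) (hadj (Sum.inr 1)) with hr1|hr1|hr1
        · replace hr1 : f (Sum.inr 1) = (Sum.inl 1) := hr1
          have hc := hinv (Sum.inr 1)
          rw [hr1, hl1] at hc
          exact absurd hc (by decide)
        · replace hr1 : f (Sum.inr 1) = (Sum.inr 0) := hr1
          have hc := hinv (Sum.inr 1)
          rw [hr1, hr0] at hc
          exact absurd hc (by decide)
        · replace hr1 : f (Sum.inr 1) = (Sum.inr 2) := hr1
          have hr2 : f (Sum.inr 2) = (Sum.inr 1) := by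
            have t := hinv (Sum.inr 1); rwa [hr1] at t
          rcases nbr_cases (Sum.inr 3) (f (Sum.inr 3)) (hadj (Sum.inr 3)) with hr3|hr3|hr3
          · replace hr3 : f (Sum.inr 3) = (Sum.inl 3) := hr3
            have hc := hinv (Sum.inr 3)
            rw [hr3, hl3] at hc
            exact absurd hc (by decide)
          · replace hr3 : f (Sum.inr 3) = (Sum.inr 2) := hr3
            have hc := hinv (Sum.inr 3)
            rw [hr3, hr2] at hc
            exact absurd hc (by decide)
          · replace hr3 : f (Sum.inr 3) = (Sum.inr 4) := hr3
            have hr4 : f (Sum.inr 4) = (Sum.inr 3) := by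
              have t := hinv (Sum.inr 3); rwa [hr3] at t
            refine ⟨4, fun v => ?_⟩
            rcases v with j|j <;> fin_cases j
            · exact hl0
            · exact hl1
            · exact hl2
            · exact hl3
            · exact hl4
            · exact hr0
            · exact hr1
            · exact hr2
            · exact hr3
            · exact hr4
      · replace hl2 : f (Sum.inl 2) = (Sum.inr 2) := hl2
        have hr2 : f (Sum.inr 2) = (Sum.inl 2) := by
          have t := hinv (Sum.inl 2); rwa [hl2] at t
        rcases nbr_cases (Sum.inl 4) (f (Sum.inl 4)) (hadj (Sum.inl 4)) with hl4|hl4|hl4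
        · replace hl4 : f (Sum.inl 4) = (Sum.inl 1) := hl4
          have hc := hinv (Sum.inl 4)
          rw [hl4, hl1] at hc
          exact absurd hc (by decide)
        · replace hl4 : f (Sum.inl 4) = (Sum.inl 2) := hl4
          have hc := hinv (Sum.inl 4)
          rw [hl4, hl2] at hc
          exact absurd hc (by decide)
        · replace hl4 : f (Sum.inl 4) = (Sum.inr 4) := hl4
          have hr4 : f (Sum.inr 4) = (Sum.inl 4) := by
            have t := hinv (Sum.inl 4); rwa [hl4] at t
          rcases nbr_cases (Sum.inr 1) (f (Sum.inr 1)) (hadj (Sum.inr 1)) with hr1|hr1|hr1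
          · replace hr1 : f (Sum.inr 1) = (Sum.inl 1) := hr1
            have hc := hinv (Sum.inr 1)
            rw [hr1, hl1] at hc
            exact absurd hc (by decide)
          · replace hr1 : f (Sum.inr 1) = (Sum.inr 0) := hr1
            have hc := hinv (Sum.inr 1)
            rw [hr1, hr0] at hc
            exact absurd hc (by decide)
          · replace hr1 : f (Sum.inr 1) = (Sum.inr 2) := hr1
            have hc := hinv (Sum.inr 1)
            rw [hr1, hr2] at hc
            exact absurd hc (by decide)
    · replace hl1 : f (Sum.inl 1) = (Sum.inl 4) := hl1
      have hl4 : f (Sum.inl 4) = (Sum.inl 1) := by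
        have t := hinv (Sum.inl 1); rwa [hl1] at t
      rcases nbr_cases (Sum.inl 2) (f (Sum.inl 2)) (hadj (Sum.inl 2)) with hl2|hl2|hl2
      · replace hl2 : f (Sum.inl 2) = (Sum.inl 0) := hl2
        have hc := hinv (Sum.inl 2)
        rw [hl2, hl0] at hc
        exact absurd hc (by decide)
      · replace hl2 : f (Sum.inl 2) = (Sum.inl 4) := hl2
        have hc := hinv (Sum.inl 2)
        rw [hl2, hl4] at hc
        exact absurd hc (by decide)
      · replace hl2 : f (Sum.inl 2) = (Sum.inr 2) := hl2
        have hr2 : f (Sum.inr 2) = (Sum.inl 2) := by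
          have t := hinv (Sum.inl 2); rwa [hl2] at t
        rcases nbr_cases (Sum.inl 3) (f (Sum.inl 3)) (hadj (Sum.inl 3)) with hl3|hl3|hl3
        · replace hl3 : f (Sum.inl 3) = (Sum.inl 0) := hl3
          have hc := hinv (Sum.inl 3)
          rw [hl3, hl0] at hc
          exact absurd hc (by decide)
        · replace hl3 : f (Sum.inl 3) = (Sum.inl 1) := hl3
          have hc := hinv (Sum.inl 3)
          rw [hl3, hl1] at hc
          exact absurd hc (by decide)
        · replace hl3 : f (Sum.inl 3) = (Sum.inr 3) := hl3
          have hr3 : f (Sum.inr 3) = (Sum.inl 3) := by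
            have t := hinv (Sum.inl 3); rwa [hl3] at t
          rcases nbr_cases (Sum.inr 1) (f (Sum.inr 1)) (hadj (Sum.inr 1)) with hr1|hr1|hr1
          · replace hr1 : f (Sum.inr 1) = (Sum.inl 1) := hr1
            have hc := hinv (Sum.inr 1)
            rw [hr1, hl1] at hc
            exact absurd hc (by decide)
          · replace hr1 : f (Sum.inr 1) = (Sum.inr 0) := hr1
            have hc := hinv (Sum.inr 1)
            rw [hr1, hr0] at hc
            exact absurd hc (by decide)
          · replace hr1 : f (Sum.inr 1) = (Sum.inr 2) := hr1
            have hc := hinv (Sum.inr 1)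
            rw [hr1, hr2] at hc
            exact absurd hc (by decide)
    · replace hl1 : f (Sum.inl 1) = (Sum.inr 1) := hl1
      have hr1 : f (Sum.inr 1) = (Sum.inl 1) := by
        have t := hinv (Sum.inl 1); rwa [hl1] at t
      rcases nbr_cases (Sum.inl 2) (f (Sum.inl 2)) (hadj (Sum.inl 2)) with hl2|hl2|hl2
      · replace hl2 : f (Sum.inl 2) = (Sum.inl 0) := hl2
        have hc := hinv (Sum.inl 2)
        rw [hl2, hl0] at hc
        exact absurd hc (by decide)
      · replace hl2 : f (Sum.inl 2) = (Sum.inl 4) := hl2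
        have hl4 : f (Sum.inl 4) = (Sum.inl 2) := by
          have t := hinv (Sum.inl 2); rwa [hl2] at t
        rcases nbr_cases (Sum.inl 3) (f (Sum.inl 3)) (hadj (Sum.inl 3)) with hl3|hl3|hl3
        · replace hl3 : f (Sum.inl 3) = (Sum.inl 0) := hl3
          have hc := hinv (Sum.inl 3)
          rw [hl3, hl0] at hc
          exact absurd hc (by decide)
        · replace hl3 : f (Sum.inl 3) = (Sum.inl 1) := hl3
          have hc := hinv (Sum.inl 3)
          rw [hl3, hl1] at hc
          exact absurd hc (by decide)
        · replace hl3 : f (Sum.inl 3) = (Sum.inr 3) := hl3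
          have hr3 : f (Sum.inr 3) = (Sum.inl 3) := by
            have t := hinv (Sum.inl 3); rwa [hl3] at t
          rcases nbr_cases (Sum.inr 2) (f (Sum.inr 2)) (hadj (Sum.inr 2)) with hr2|hr2|hr2
          · replace hr2 : f (Sum.inr 2) = (Sum.inl 2) := hr2
            have hc := hinv (Sum.inr 2)
            rw [hr2, hl2] at hc
            exact absurd hc (by decide)
          · replace hr2 : f (Sum.inr 2) = (Sum.inr 1) := hr2
            have hc := hinv (Sum.inr 2)
            rw [hr2, hr1] at hc
            exact absurd hc (by decide)
          · replace hr2 : f (Sum.inr 2) = (Sum.inr 3) := hr2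
            have hc := hinv (Sum.inr 2)
            rw [hr2, hr3] at hc
            exact absurd hc (by decide)
      · replace hl2 : f (Sum.inl 2) = (Sum.inr 2) := hl2
        have hr2 : f (Sum.inr 2) = (Sum.inl 2) := by
          have t := hinv (Sum.inl 2); rwa [hl2] at t
        rcases nbr_cases (Sum.inl 3) (f (Sum.inl 3)) (hadj (Sum.inl 3)) with hl3|hl3|hl3
        · replace hl3 : f (Sum.inl 3) = (Sum.inl 0) := hl3
          have hc := hinv (Sum.inl 3)
          rw [hl3, hl0] at hc
          exact absurd hc (by decide)
        · replace hl3 : f (Sum.inl 3) = (Sum.inl 1) := hl3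
          have hc := hinv (Sum.inl 3)
          rw [hl3, hl1] at hc
          exact absurd hc (by decide)
        · replace hl3 : f (Sum.inl 3) = (Sum.inr 3) := hl3
          have hr3 : f (Sum.inr 3) = (Sum.inl 3) := by
            have t := hinv (Sum.inl 3); rwa [hl3] at t
          rcases nbr_cases (Sum.inl 4) (f (Sum.inl 4)) (hadj (Sum.inl 4)) with hl4|hl4|hl4
          · replace hl4 : f (Sum.inl 4) = (Sum.inl 1) := hl4
            have hc := hinv (Sum.inl 4)
            rw [hl4, hl1] at hc
            exact absurd hc (by decide)
          · replace hl4 : f (Sum.inl 4) = (Sum.inl 2) := hl4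
            have hc := hinv (Sum.inl 4)
            rw [hl4, hl2] at hc
            exact absurd hc (by decide)
          · replace hl4 : f (Sum.inl 4) = (Sum.inr 4) := hl4
            have hr4 : f (Sum.inr 4) = (Sum.inl 4) := by
              have t := hinv (Sum.inl 4); rwa [hl4] at t
            refine ⟨5, fun v => ?_⟩
            rcases v with j|j <;> fin_cases j
            · exact hl0
            · exact hl1
            · exact hl2
            · exact hl3
            · exact hl4
            · exact hr0
            · exact hr1
            · exact hr2
            · exact hr3
            · exact hr4

def W0 : (GP 5 2).Walk (Sum.inl 4) (Sum.inl 4) :=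
  Walk.cons (show (GP 5 2).Adj (Sum.inl 4) (Sum.inr 4) by decide) (Walk.cons (show (GP 5 2).Adj (Sum.inr 4) (Sum.inr 0) by decide) (Walk.cons (show (GP 5 2).Adj (Sum.inr 0) (Sum.inr 1) by decide) (Walk.cons (show (GP 5 2).Adj (Sum.inr 1) (Sum.inr 2) by decide) (Walk.cons (show (GP 5 2).Adj (Sum.inr 2) (Sum.inr 3) by decide) (Walk.cons (show (GP 5 2).Adj (Sum.inr 3) (Sum.inl 3) by decide) (Walk.cons (show (GP 5 2).Adj (Sum.inl 3) (Sum.inl 1) by decide) (Walk.cons (show (GP 5 2).Adj (Sum.inl 1) (Sum.inl 4) by decide) (Walk.nil))))))))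

lemma W0cyc : W0.IsCycle := by
  rw [SimpleGraph.Walk.isCycle_def, SimpleGraph.Walk.isTrail_def]
  refine ⟨by decide, by simp [W0], by decide⟩

lemma W0alt (M : (GP 5 2).Subgraph) (f : V5 → V5) (hf : ∀ v w, M.Adj v w ↔ w = f v)
    (hfm : ∀ v, f v = pmf 0 v) :
    ∀ u ∈ W0.support, ∃ e ∈ W0.edges, e ∈ M.edgeSet ∧ u ∈ e := by
  intro u hu
  fin_cases hu <;>
    exact ⟨s(_, f _), by rw [hfm]; decide,
      SimpleGraph.Subgraph.mem_edgeSet.mpr ((hf _ _).mpr rfl), Sym2.mem_mk_left _ _⟩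

def W1 : (GP 5 2).Walk (Sum.inr 0) (Sum.inr 0) :=
  Walk.cons (show (GP 5 2).Adj (Sum.inr 0) (Sum.inr 1) by decide) (Walk.cons (show (GP 5 2).Adj (Sum.inr 1) (Sum.inr 2) by decide) (Walk.cons (show (GP 5 2).Adj (Sum.inr 2) (Sum.inl 2) by decide) (Walk.cons (show (GP 5 2).Adj (Sum.inl 2) (Sum.inl 0) by decide) (Walk.cons (show (GP 5 2).Adj (Sum.inl 0) (Sum.inl 3) by decide) (Walk.cons (show (GP 5 2).Adj (Sum.inl 3) (Sum.inr 3) by decide) (Walk.cons (show (GP 5 2).Adj (Sum.inr 3) (Sum.inr 4) by decide) (Walk.cons (show (GP 5 2).Adj (Sum.inr 4) (Sum.inr 0) by decide) (Walk.nil))))))))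

lemma W1cyc : W1.IsCycle := by
  rw [SimpleGraph.Walk.isCycle_def, SimpleGraph.Walk.isTrail_def]
  refine ⟨by decide, by simp [W1], by decide⟩

lemma W1alt (M : (GP 5 2).Subgraph) (f : V5 → V5) (hf : ∀ v w, M.Adj v w ↔ w = f v)
    (hfm : ∀ v, f v = pmf 1 v) :
    ∀ u ∈ W1.support, ∃ e ∈ W1.edges, e ∈ M.edgeSet ∧ u ∈ e := by
  intro u hu
  fin_cases hu <;>
    exact ⟨s(_, f _), by rw [hfm]; decide,
      SimpleGraph.Subgraph.mem_edgeSet.mpr ((hf _ _).mpr rfl), Sym2.mem_mk_left _ _⟩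

def W2 : (GP 5 2).Walk (Sum.inr 3) (Sum.inr 3) :=
  Walk.cons (show (GP 5 2).Adj (Sum.inr 3) (Sum.inr 4) by decide) (Walk.cons (show (GP 5 2).Adj (Sum.inr 4) (Sum.inr 0) by decide) (Walk.cons (show (GP 5 2).Adj (Sum.inr 0) (Sum.inr 1) by decide) (Walk.cons (show (GP 5 2).Adj (Sum.inr 1) (Sum.inl 1) by decide) (Walk.cons (show (GP 5 2).Adj (Sum.inl 1) (Sum.inl 4) by decide) (Walk.cons (show (GP 5 2).Adj (Sum.inl 4) (Sum.inl 2) by decide) (Walk.cons (show (GP 5 2).Adj (Sum.inl 2) (Sum.inr 2) by decide) (Walk.cons (show (GP 5 2).Adj (Sum.inr 2) (Sum.inr 3) by decide) (Walk.nil))))))))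

lemma W2cyc : W2.IsCycle := by
  rw [SimpleGraph.Walk.isCycle_def, SimpleGraph.Walk.isTrail_def]
  refine ⟨by decide, by simp [W2], by decide⟩

lemma W2alt (M : (GP 5 2).Subgraph) (f : V5 → V5) (hf : ∀ v w, M.Adj v w ↔ w = f v)
    (hfm : ∀ v, f v = pmf 2 v) :
    ∀ u ∈ W2.support, ∃ e ∈ W2.edges, e ∈ M.edgeSet ∧ u ∈ e := by
  intro u hu
  fin_cases hu <;>
    exact ⟨s(_, f _), by rw [hfm]; decide,
      SimpleGraph.Subgraph.mem_edgeSet.mpr ((hf _ _).mpr rfl), Sym2.mem_mk_left _ _⟩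

def W3 : (GP 5 2).Walk (Sum.inl 3) (Sum.inl 3) :=
  Walk.cons (show (GP 5 2).Adj (Sum.inl 3) (Sum.inl 1) by decide) (Walk.cons (show (GP 5 2).Adj (Sum.inl 1) (Sum.inr 1) by decide) (Walk.cons (show (GP 5 2).Adj (Sum.inr 1) (Sum.inr 2) by decide) (Walk.cons (show (GP 5 2).Adj (Sum.inr 2) (Sum.inr 3) by decide) (Walk.cons (show (GP 5 2).Adj (Sum.inr 3) (Sum.inr 4) by decide) (Walk.cons (show (GP 5 2).Adj (Sum.inr 4) (Sum.inr 0) by decide) (Walk.cons (show (GP 5 2).Adj (Sum.inr 0) (Sum.inl 0) by decide) (Walk.cons (show (GP 5 2).Adj (Sum.inl 0) (Sum.inl 3) by decide) (Walk.nil))))))))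

lemma W3cyc : W3.IsCycle := by
  rw [SimpleGraph.Walk.isCycle_def, SimpleGraph.Walk.isTrail_def]
  refine ⟨by decide, by simp [W3], by decide⟩

lemma W3alt (M : (GP 5 2).Subgraph) (f : V5 → V5) (hf : ∀ v w, M.Adj v w ↔ w = f v)
    (hfm : ∀ v, f v = pmf 3 v) :
    ∀ u ∈ W3.support, ∃ e ∈ W3.edges, e ∈ M.edgeSet ∧ u ∈ e := by
  intro u hu
  fin_cases hu <;>
    exact ⟨s(_, f _), by rw [hfm]; decide,
      SimpleGraph.Subgraph.mem_edgeSet.mpr ((hf _ _).mpr rfl), Sym2.mem_mk_left _ _⟩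

def W4 : (GP 5 2).Walk (Sum.inl 4) (Sum.inl 4) :=
  Walk.cons (show (GP 5 2).Adj (Sum.inl 4) (Sum.inr 4) by decide) (Walk.cons (show (GP 5 2).Adj (Sum.inr 4) (Sum.inr 3) by decide) (Walk.cons (show (GP 5 2).Adj (Sum.inr 3) (Sum.inl 3) by decide) (Walk.cons (show (GP 5 2).Adj (Sum.inl 3) (Sum.inl 1) by decide) (Walk.cons (show (GP 5 2).Adj (Sum.inl 1) (Sum.inr 1) by decide) (Walk.cons (show (GP 5 2).Adj (Sum.inr 1) (Sum.inr 2) by decide) (Walk.cons (show (GP 5 2).Adj (Sum.inr 2) (Sum.inl 2) by decide) (Walk.cons (show (GP 5 2).Adj (Sum.inl 2) (Sum.inl 4) by decide) (Walk.nil))))))))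

lemma W4cyc : W4.IsCycle := by
  rw [SimpleGraph.Walk.isCycle_def, SimpleGraph.Walk.isTrail_def]
  refine ⟨by decide, by simp [W4], by decide⟩

lemma W4alt (M : (GP 5 2).Subgraph) (f : V5 → V5) (hf : ∀ v w, M.Adj v w ↔ w = f v)
    (hfm : ∀ v, f v = pmf 4 v) :
    ∀ u ∈ W4.support, ∃ e ∈ W4.edges, e ∈ M.edgeSet ∧ u ∈ e := by
  intro u hu
  fin_cases hu <;>
    exact ⟨s(_, f _), by rw [hfm]; decide,
      SimpleGraph.Subgraph.mem_edgeSet.mpr ((hf _ _).mpr rfl), Sym2.mem_mk_left _ _⟩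

def W5 : (GP 5 2).Walk (Sum.inl 0) (Sum.inl 0) :=
  Walk.cons (show (GP 5 2).Adj (Sum.inl 0) (Sum.inr 0) by decide) (Walk.cons (show (GP 5 2).Adj (Sum.inr 0) (Sum.inr 1) by decide) (Walk.cons (show (GP 5 2).Adj (Sum.inr 1) (Sum.inl 1) by decide) (Walk.cons (show (GP 5 2).Adj (Sum.inl 1) (Sum.inl 3) by decide) (Walk.cons (show (GP 5 2).Adj (Sum.inl 3) (Sum.inr 3) by decide) (Walk.cons (show (GP 5 2).Adj (Sum.inr 3) (Sum.inr 2) by decide) (Walk.cons (show (GP 5 2).Adj (Sum.inr 2) (Sum.inl 2) by decide) (Walk.cons (show (GP 5 2).Adj (Sum.inl 2) (Sum.inl 0) by decide) (Walk.nil))))))))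

lemma W5cyc : W5.IsCycle := by
  rw [SimpleGraph.Walk.isCycle_def, SimpleGraph.Walk.isTrail_def]
  refine ⟨by decide, by simp [W5], by decide⟩

lemma W5alt (M : (GP 5 2).Subgraph) (f : V5 → V5) (hf : ∀ v w, M.Adj v w ↔ w = f v)
    (hfm : ∀ v, f v = pmf 5 v) :
    ∀ u ∈ W5.support, ∃ e ∈ W5.edges, e ∈ M.edgeSet ∧ u ∈ e := by
  intro u hu
  fin_cases hu <;>
    exact ⟨s(_, f _), by rw [hfm]; decide,
      SimpleGraph.Subgraph.mem_edgeSet.mpr ((hf _ _).mpr rfl), Sym2.mem_mk_left _ _⟩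


theorem stmt5 (M : (GP 5 2).Subgraph) (hM : M.IsPerfectMatching) :
    maxDisjAltCycles (GP 5 2) M = 1 ∧
    forcingNum (GP 5 2) M > maxDisjAltCycles (GP 5 2) M := by
  classical
  -- the partner function of the matching
  have hex : ∀ v : V5, ∃ w, M.Adj v w ∧ ∀ y, M.Adj v y → y = w := by
    intro v
    obtain ⟨w, hw, hu⟩ := hM.1 (hM.2 v)
    exact ⟨w, hw, hu⟩
  choose f hf1 hf2 using hex
  have hf : ∀ v w, M.Adj v w ↔ w = f v := fun v w => ⟨fun h => hf2 v w h, fun h => h ▸ hf1 v⟩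
  have hadj : ∀ v, (GP 5 2).Adj v (f v) := fun v => M.adj_sub (hf1 v)
  have hinv : ∀ v, f (f v) = v := fun v => (hf2 (f v) v ((hf1 v).symm)).symm
  have hne : ∀ v, f v ≠ v := fun v => (hadj v).ne'
  obtain ⟨i, hfm⟩ := classify f hadj hinv
  -- an alternating cycle exists
  have hcycex : ∃ (v : V5) (p : (GP 5 2).Walk v v), IsAltCycle (GP 5 2) M p := by
    fin_cases i
    · exact ⟨_, W0, W0cyc, W0alt M f hf (by exact hfm)⟩
    · exact ⟨_, W1, W1cyc, W1alt M f hf (by exact hfm)⟩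
    · exact ⟨_, W2, W2cyc, W2alt M f hf (by exact hfm)⟩
    · exact ⟨_, W3, W3cyc, W3alt M f hf (by exact hfm)⟩
    · exact ⟨_, W4, W4cyc, W4alt M f hf (by exact hfm)⟩
    · exact ⟨_, W5, W5cyc, W5alt M f hf (by exact hfm)⟩
  obtain ⟨v0, p0, hp0⟩ := hcycex
  -- the set in the definition of maxDisjAltCycles
  have hub : ∀ k ∈ {k | ∃ c : Fin k → Σ v : V5, (GP 5 2).Walk v v,
      (∀ i, IsAltCycle (GP 5 2) M (c i).2) ∧
      Pairwise fun i j => List.Disjoint (c i).2.support (c j).2.support}, k ≤ 1 := by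
    rintro k ⟨c, hcyc, hdisj⟩
    by_contra hk
    push_neg at hk
    have h0lt : 0 < k := by omega
    have h1lt : 1 < k := by omega
    have hne01 : (⟨0, h0lt⟩ : Fin k) ≠ ⟨1, h1lt⟩ := by
      intro h
      simpa using congrArg Fin.val h
    have hd := hdisj hne01
    have hS0 := alt_support_big M f hf hinv hne (hcyc ⟨0, h0lt⟩)
    have hS1 := alt_support_big M f hf hinv hne (hcyc ⟨1, h1lt⟩)
    have hdisj' : Disjoint ((c ⟨0, h0lt⟩).2.support.toFinset)
        ((c ⟨1, h1lt⟩).2.support.toFinset) :=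
      Finset.disjoint_left.mpr fun a ha hb =>
        hd (List.mem_toFinset.mp ha) (List.mem_toFinset.mp hb)
    have hunion := Finset.card_union_of_disjoint hdisj'
    have hle : ((c ⟨0, h0lt⟩).2.support.toFinset ∪
        (c ⟨1, h1lt⟩).2.support.toFinset).card ≤ 10 := by
      have := Finset.card_le_univ ((c ⟨0, h0lt⟩).2.support.toFinset ∪
        (c ⟨1, h1lt⟩).2.support.toFinset)
      simpa using this
    omega
  have h1mem : 1 ∈ {k | ∃ c : Fin k → Σ v : V5, (GP 5 2).Walk v v,
      (∀ i, IsAltCycle (GP 5 2) M (c i).2) ∧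
      Pairwise fun i j => List.Disjoint (c i).2.support (c j).2.support} :=
    ⟨fun _ => ⟨v0, p0⟩, fun _ => hp0,
      fun a b hab => absurd (Subsingleton.elim a b) hab⟩
  have hmax : maxDisjAltCycles (GP 5 2) M = 1 := by
    unfold maxDisjAltCycles
    exact le_antisymm (csSup_le ⟨1, h1mem⟩ hub) (le_csSup ⟨1, fun k hk => hub k hk⟩ h1mem)
  refine ⟨hmax, ?_⟩
  rw [hmax]
  -- forcing number ≥ 2
  have hforce : 2 ≤ forcingNum (GP 5 2) M := by
    unfold forcingNum
    -- the whole edge set is a forcing set, so the set is nonempty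
    have huniq : ∀ M' : (GP 5 2).Subgraph, M'.IsPerfectMatching →
        M.edgeSet ⊆ M'.edgeSet → M' = M := by
      intro M' hM' hsub
      have hAdj : ∀ v w, M'.Adj v w ↔ M.Adj v w := by
        intro v w
        constructor
        · intro h
          have h2 : M'.Adj v (f v) :=
            Subgraph.mem_edgeSet.mp (hsub (Subgraph.mem_edgeSet.mpr (hf1 v)))
          obtain ⟨wu, hwu, huu⟩ := hM'.1 (hM'.2 v)
          have e1 : w = wu := huu w h
          have e2 : f v = wu := huu (f v) h2
          exact (hf v w).mpr (by rw [e1, e2])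
        · intro h
          exact Subgraph.mem_edgeSet.mp (hsub (Subgraph.mem_edgeSet.mpr h))
      apply Subgraph.ext
      · rw [hM'.2.verts_eq_univ, hM.2.verts_eq_univ]
      · funext v w
        exact propext (hAdj v w)
    have hTne : M.edgeSet.ncard ∈ {k | ∃ S : Set (Sym2 V5),
        IsForcingSet (GP 5 2) M S ∧ S.ncard = k} :=
      ⟨M.edgeSet, ⟨subset_rfl, huniq⟩, rfl⟩
    have hTge : ∀ k ∈ {k | ∃ S : Set (Sym2 V5),
        IsForcingSet (GP 5 2) M S ∧ S.ncard = k}, 2 ≤ k := by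
      rintro k ⟨S, ⟨hSsub, hSforce⟩, rfl⟩
      by_contra hk
      push_neg at hk
      obtain ⟨j, hji, hja⟩ : ∃ j : Fin 6, j ≠ i ∧ S ⊆ (Msub j).edgeSet := by
        interval_cases hS : S.ncard
        · -- S = ∅
          have hSe : S = ∅ := (Set.ncard_eq_zero (Set.toFinite S)).mp hS
          obtain ⟨j, hj⟩ := exists_ne i
          exact ⟨j, hj, by simp [hSe]⟩
        · -- S = {e}
          obtain ⟨e, rfl⟩ := Set.ncard_eq_one.mp hS
          induction e using Sym2.ind with
          | _ a b =>
            have he : M.Adj a b := Subgraph.mem_edgeSet.mp (hSsub rfl)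
            have hb : b = pmf i a := by rw [(hf a b).mp he, hfm]
            obtain ⟨j, hji, hja⟩ := pmf_other i a
            refine ⟨j, hji, ?_⟩
            intro x hx
            rw [Set.mem_singleton_iff] at hx
            subst hx
            exact Subgraph.mem_edgeSet.mpr (show b = pmf j a by rw [hb, hja])
      have hMj := hSforce (Msub j) (Msub_pm j) hja
      obtain ⟨v, hv⟩ : ∃ v, pmf j v ≠ pmf i v := by
        by_contra hc
        push_neg at hc
        exact pmf_differ j i ⟨hji, hc⟩
      have h1 : M.Adj v (pmf i v) := (hf v _).mpr ((hfm v).symm)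
      rw [← hMj] at h1
      exact hv ((show pmf i v = pmf j v from h1).symm)
    have hmem := Nat.sInf_mem ⟨_, hTne⟩
    exact hTge _ hmem
  omega
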